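/- arXiv:2110.09722 — 4 statements merged into one kernel-verified Lean document; each statement's English description precedes it below -/
import Mathlib

section
/- Let d ≥ 1 and let μ : (Fin d → ℝ) → ℝ be 1-Lipschitz with respect to the sup metric d_∞(x,y) = max_i |x_i − y_i|. Let r > 0, let C be a subset of ℝ^d of d_∞-diameter at most r, let x_1, …, x_n ∈ C, let T > 1 be real, and let ε_1, …, ε_n be independent standard Gaussian N(0,1) random variables. Define the empirical average μ̂ = (1/n) Σ_{i=1}^n (μ(x_i) + ε_i). Then with probability at least 1 − 2·T^{−8}, for every x ∈ C it holds that |μ(x) − μ̂| ≤ r + √(16 · log T / n). -/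
open MeasureTheory ProbabilityTheory

lemma aux_pdf_mul (t x : ℝ) :
    Real.exp (t * x) * gaussianPDFReal 0 1 x = Real.exp (t ^ 2 / 2) * gaussianPDFReal t 1 x := by
  simp only [gaussianPDFReal, NNReal.coe_one, mul_one, sub_zero]
  rw [mul_left_comm, ← Real.exp_add, mul_left_comm, ← Real.exp_add]
  congr 2
  ring

lemma aux_integrable_exp_mul (t : ℝ) :
    Integrable (fun x => Real.exp (t * x)) (gaussianReal 0 1) := by
  rw [gaussianReal_of_var_ne_zero _ one_ne_zero, gaussianPDF_def,
    show (fun x => ENNReal.ofReal (gaussianPDFReal 0 1 x))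
        = fun x => ((gaussianPDFReal 0 1 x).toNNReal : ENNReal) from rfl,
    integrable_withDensity_iff_integrable_smul ((measurable_gaussianPDFReal 0 1).real_toNNReal)]
  have : (fun x => (gaussianPDFReal 0 1 x).toNNReal • Real.exp (t * x))
      = fun x => Real.exp (t ^ 2 / 2) * gaussianPDFReal t 1 x := by
    funext x
    rw [NNReal.smul_def, smul_eq_mul, Real.coe_toNNReal _ (gaussianPDFReal_nonneg 0 1 x),
      mul_comm (gaussianPDFReal 0 1 x), aux_pdf_mul]
  rw [this]
  exact (integrable_gaussianPDFReal t 1).const_mul _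

lemma aux_integral_exp_mul (t : ℝ) :
    ∫ x, Real.exp (t * x) ∂(gaussianReal 0 1) = Real.exp (t ^ 2 / 2) := by
  rw [gaussianReal_of_var_ne_zero _ one_ne_zero, gaussianPDF_def,
    show (fun x => ENNReal.ofReal (gaussianPDFReal 0 1 x))
        = fun x => ((gaussianPDFReal 0 1 x).toNNReal : ENNReal) from rfl,
    integral_withDensity_eq_integral_smul ((measurable_gaussianPDFReal 0 1).real_toNNReal)]
  have : (fun x => (gaussianPDFReal 0 1 x).toNNReal • Real.exp (t * x))
      = fun x => Real.exp (t ^ 2 / 2) * gaussianPDFReal t 1 x := by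
    funext x
    rw [NNReal.smul_def, smul_eq_mul, Real.coe_toNNReal _ (gaussianPDFReal_nonneg 0 1 x),
      mul_comm (gaussianPDFReal 0 1 x), aux_pdf_mul]
  rw [this, integral_const_mul, integral_gaussianPDFReal_eq_one t one_ne_zero, mul_one]

/-- Single-cube concentration: for a 1-Lipschitz reward `μ` on `ℝ^d` (sup metric),
arms `xs i` lying in a set `C` of diameter at most `r`, and i.i.d. standard Gaussian
noises, the empirical average of the noisy rewards is within `r + √(16 log T / n)`
of `μ x` for every `x ∈ C`, with probability at least `1 - 2 T⁻⁸`. -/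
theorem stmt_1 {Ω : Type*} [MeasurableSpace Ω] (P : Measure Ω) [IsProbabilityMeasure P]
    (d : ℕ) (hd : 1 ≤ d) (μ : (Fin d → ℝ) → ℝ) (hμ : LipschitzWith 1 μ)
    (r : ℝ) (hr : 0 < r) (C : Set (Fin d → ℝ))
    (hC : ∀ x ∈ C, ∀ y ∈ C, dist x y ≤ r)
    (n : ℕ) (hn : 1 ≤ n) (xs : Fin n → (Fin d → ℝ)) (hxs : ∀ i, xs i ∈ C)
    (T : ℝ) (hT : 1 < T)
    (ε : Fin n → Ω → ℝ) (hmeas : ∀ i, Measurable (ε i))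
    (hindep : iIndepFun ε P)
    (hgauss : ∀ i, P.map (ε i) = gaussianReal 0 1) :
    ENNReal.ofReal (1 - 2 * T ^ (-8 : ℝ)) ≤
      P {ω | ∀ x ∈ C,
        |μ x - (1 / n : ℝ) * ∑ i, (μ (xs i) + ε i ω)| ≤ r + Real.sqrt (16 * Real.log T / n)} := by
  have hn0 : (0:ℝ) < n := by exact_mod_cast hn
  have hn0' : (n:ℝ) ≠ 0 := ne_of_gt hn0
  set L := Real.log T with hLdef
  have hL : 0 < L := Real.log_pos hT
  set a := Real.sqrt (16 * n * L) with hadef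
  have ha0 : 0 ≤ a := Real.sqrt_nonneg _
  have ha2 : a ^ 2 = 16 * n * L := Real.sq_sqrt (by positivity)
  set t : ℝ := a / n with htdef
  have ht0 : 0 ≤ t := div_nonneg ha0 hn0.le
  -- integrability and mgf of each noise
  have hint : ∀ (u : ℝ) (i : Fin n), Integrable (fun ω => Real.exp (u * ε i ω)) P := by
    intro u i
    have h1 := aux_integrable_exp_mul u
    rw [← hgauss i] at h1
    exact (integrable_map_measure
      ((measurable_id.const_mul u).exp).aestronglyMeasurable (hmeas i).aemeasurable).mp h1
  have hmgf : ∀ (u : ℝ) (i : Fin n), mgf (ε i) P u = Real.exp (u ^ 2 / 2) := by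
    intro u i
    rw [mgf, show ∫ ω, Real.exp (u * ε i ω) ∂P
        = ∫ x, Real.exp (u * x) ∂(P.map (ε i)) from
      (integral_map (hmeas i).aemeasurable
        ((measurable_id.const_mul u).exp).aestronglyMeasurable).symm,
      hgauss i, aux_integral_exp_mul]
  -- mgf of the sum
  have hmgfS : ∀ u : ℝ, mgf (∑ i, ε i) P u = Real.exp (n * (u ^ 2 / 2)) := by
    intro u
    rw [hindep.mgf_sum hmeas Finset.univ]
    simp only [hmgf, Finset.prod_const, Finset.card_univ, Fintype.card_fin]
    rw [← Real.exp_nat_mul]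
  have hintS : ∀ u : ℝ, Integrable (fun ω => Real.exp (u * (∑ i, ε i) ω)) P := fun u =>
    hindep.integrable_exp_mul_sum hmeas (fun i _ => hint u i)
  -- the Chernoff bounds
  have hval : Real.exp (-t * a) * Real.exp ((n:ℝ) * (t ^ 2 / 2)) = T ^ (-8 : ℝ) := by
    rw [← Real.exp_add, Real.rpow_def_of_pos (lt_trans one_pos hT)]
    congr 1
    have : -t * a + (n:ℝ) * (t ^ 2 / 2) = -(a ^ 2) / (2 * n) := by
      field_simp [htdef]
      have htn : t * n = a := div_mul_cancel₀ a hn0'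
      rw [htn]
      ring
    rw [this, ha2]
    field_simp
    ring
  have hup : (P {ω | a ≤ (∑ i, ε i) ω}).toReal ≤ T ^ (-8 : ℝ) := by
    have := measure_ge_le_exp_mul_mgf (X := ∑ i, ε i) (μ := P) (t := t) a ht0 (hintS t)
    rwa [hmgfS, hval] at this
  have hlo : (P {ω | (∑ i, ε i) ω ≤ -a}).toReal ≤ T ^ (-8 : ℝ) := by
    have := measure_le_le_exp_mul_mgf (X := ∑ i, ε i) (μ := P) (t := -t) (-a)
      (neg_nonpos.mpr ht0) (hintS (-t))
    rw [hmgfS, neg_neg, neg_sq, mul_neg, ← neg_mul] at this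
    rwa [hval] at this
  set c : ℝ := T ^ (-8 : ℝ) with hcdef
  have hc0 : 0 ≤ c := Real.rpow_nonneg (by linarith) _
  have hup' : P {ω | a ≤ (∑ i, ε i) ω} ≤ ENNReal.ofReal c := by
    rw [← ENNReal.ofReal_toReal (measure_ne_top P _)]
    exact ENNReal.ofReal_le_ofReal hup
  have hlo' : P {ω | (∑ i, ε i) ω ≤ -a} ≤ ENNReal.ofReal c := by
    rw [← ENNReal.ofReal_toReal (measure_ne_top P _)]
    exact ENNReal.ofReal_le_ofReal hlo
  set E : Set Ω := {ω | |(∑ i, ε i) ω| ≤ a} with hEdef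
  have hEc : P Eᶜ ≤ ENNReal.ofReal (2 * c) := by
    have hsub : Eᶜ ⊆ {ω | a ≤ (∑ i, ε i) ω} ∪ {ω | (∑ i, ε i) ω ≤ -a} := by
      intro ω hω
      simp only [hEdef, Set.mem_compl_iff, Set.mem_setOf_eq, not_le] at hω
      rcases lt_abs.mp hω with h | h
      · exact Or.inl h.le
      · exact Or.inr (show _ ≤ -a from by linarith)
    calc P Eᶜ ≤ P ({ω | a ≤ (∑ i, ε i) ω} ∪ {ω | (∑ i, ε i) ω ≤ -a}) := measure_mono hsub
      _ ≤ P {ω | a ≤ (∑ i, ε i) ω} + P {ω | (∑ i, ε i) ω ≤ -a} := measure_union_le _ _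
      _ ≤ ENNReal.ofReal c + ENNReal.ofReal c := add_le_add hup' hlo'
      _ = ENNReal.ofReal (2 * c) := by rw [← ENNReal.ofReal_add hc0 hc0, two_mul]
  have hPE : ENNReal.ofReal (1 - 2 * c) ≤ P E := by
    have h1 : (1 : ENNReal) ≤ P E + P Eᶜ := by
      rw [← measure_univ (μ := P), ← Set.union_compl_self E]
      exact measure_union_le _ _
    have h2 : (1 : ENNReal) - P Eᶜ ≤ P E := tsub_le_iff_right.mpr h1
    refine le_trans ?_ h2
    refine le_trans ?_ (tsub_le_tsub le_rfl hEc)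
    rcases le_or_gt (1 - 2 * c) 0 with h | h
    · simp [ENNReal.ofReal_eq_zero.mpr h]
    · refine ENNReal.le_sub_of_add_le_left ENNReal.ofReal_ne_top ?_
      rw [← ENNReal.ofReal_add (by positivity) h.le]
      simp
  refine le_trans hPE (measure_mono ?_)
  -- deterministic inclusion
  intro ω hω x hx
  simp only [hEdef, Set.mem_setOf_eq, Finset.sum_apply] at hω ⊢
  have hsq : a / n = Real.sqrt (16 * L / n) := by
    rw [hadef, show (16 * (n:ℝ) * L) = (16 * L / n) * (n:ℝ) ^ 2 by field_simp,
      Real.sqrt_mul (by positivity) ((n:ℝ) ^ 2), Real.sqrt_sq hn0.le,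
      mul_div_assoc, div_self hn0', mul_one]
  have key : μ x - (1 / n : ℝ) * ∑ i, (μ (xs i) + ε i ω)
      = (1 / n : ℝ) * (∑ i, (μ x - μ (xs i))) - (1 / n : ℝ) * (∑ i, ε i ω) := by
    rw [Finset.sum_add_distrib, Finset.sum_sub_distrib, Finset.sum_const, Finset.card_univ,
      Fintype.card_fin, nsmul_eq_mul]
    field_simp
    ring
  rw [key]
  have h1 : |(1 / n : ℝ) * (∑ i, (μ x - μ (xs i)))| ≤ r := by
    rw [abs_mul, abs_of_nonneg (by positivity : (0:ℝ) ≤ 1 / n)]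
    calc (1 / n : ℝ) * |∑ i, (μ x - μ (xs i))|
        ≤ (1 / n : ℝ) * ∑ i, |μ x - μ (xs i)| := by
          gcongr
          exact Finset.abs_sum_le_sum_abs _ _
      _ ≤ (1 / n : ℝ) * ∑ _i : Fin n, r := by
          gcongr with i _
          rw [← Real.dist_eq]
          calc dist (μ x) (μ (xs i)) ≤ 1 * dist x (xs i) := by
                simpa using hμ.dist_le_mul x (xs i)
            _ ≤ r := by rw [one_mul]; exact hC x hx (xs i) (hxs i)
      _ = r := by
          rw [Finset.sum_const, Finset.card_univ, Fintype.card_fin, nsmul_eq_mul]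
          field_simp
  have h2 : |(1 / n : ℝ) * (∑ i, ε i ω)| ≤ Real.sqrt (16 * L / n) := by
    rw [abs_mul, abs_of_nonneg (by positivity : (0:ℝ) ≤ 1 / n), ← hsq]
    calc (1 / n : ℝ) * |∑ i, ε i ω| ≤ (1 / n : ℝ) * a := by gcongr
      _ = a / n := one_div_mul_eq_div _ _
  calc |(1 / n : ℝ) * (∑ i, (μ x - μ (xs i))) - (1 / n : ℝ) * (∑ i, ε i ω)|
      ≤ |(1 / n : ℝ) * (∑ i, (μ x - μ (xs i)))| + |(1 / n : ℝ) * (∑ i, ε i ω)| :=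
        abs_sub _ _
    _ ≤ r + Real.sqrt (16 * L / n) := add_le_add h1 h2
end

section
/- Let q ∈ (0,1) be a real number, let B ≥ 1 be a natural number, and let t_1, …, t_B be real numbers with 0 < t_1 ≤ t_2 ≤ … ≤ t_B = T. Then max{ t_1, max_{2 ≤ k ≤ B} t_k / t_{k−1}^{q} } ≥ T^{(1−q)/(1−q^B)}. -/
/-- Grid-optimization step of the static lower bound: for any grid
`0 < t_1 ≤ … ≤ t_B = T` and `q ∈ (0,1)`, the maximum of `t_1` and the quantities
`t_k / t_{k-1}^q` (`2 ≤ k ≤ B`) is at least `T^{(1-q)/(1-q^B)}`. -/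
theorem stmt_5 (q : ℝ) (hq : q ∈ Set.Ioo (0 : ℝ) 1) (B : ℕ) (hB : 1 ≤ B)
    (t : ℕ → ℝ) (T : ℝ) (ht1 : 0 < t 1)
    (hmono : ∀ k, 2 ≤ k → k ≤ B → t (k - 1) ≤ t k) (htB : t B = T) :
    T ^ ((1 - q) / (1 - q ^ B)) ≤ t 1 ∨
      ∃ k, 2 ≤ k ∧ k ≤ B ∧ T ^ ((1 - q) / (1 - q ^ B)) ≤ t k / t (k - 1) ^ q := by
  obtain ⟨hq0, hq1⟩ := hq
  by_contra h
  push_neg at h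
  obtain ⟨h1, h2⟩ := h
  have htpos : ∀ k, 1 ≤ k → k ≤ B → 0 < t k := by
    intro k hk1 hkB
    induction k with
    | zero => omega
    | succ n ih =>
      rcases Nat.lt_or_ge n 1 with hn | hn
      · have : n + 1 = 1 := by omega
        rw [this]; exact ht1
      · have hle := hmono (n + 1) (by omega) hkB
        simp only [Nat.add_sub_cancel] at hle
        exact lt_of_lt_of_le (ih hn (by omega)) hle
  have hT : 0 < T := htB ▸ htpos B hB le_rfl
  have hqB : q ^ B < 1 := pow_lt_one₀ hq0.le hq1 (by omega)
  have h1q : 0 < 1 - q := by linarith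
  have h1qB : 0 < 1 - q ^ B := by linarith
  set M := T ^ ((1 - q) / (1 - q ^ B)) with hMdef
  have hM : 0 < M := Real.rpow_pos_of_pos hT _
  have key : ∀ k, 1 ≤ k → k ≤ B → t k < M ^ ((1 - q ^ k) / (1 - q)) := by
    intro k hk1 hkB
    induction k with
    | zero => omega
    | succ n ih =>
      rcases Nat.lt_or_ge n 1 with hn | hn
      · have : n + 1 = 1 := by omega
        rw [this]
        have : (1 - q ^ 1) / (1 - q) = 1 := by
          field_simp
        rw [this, Real.rpow_one]
        exact h1
      · have hin := ih hn (by omega)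
        have ht2 := h2 (n + 1) (by omega) hkB
        simp only [Nat.add_sub_cancel] at ht2
        have htn : 0 < t n := htpos n hn (by omega)
        have htnq : 0 < t n ^ q := Real.rpow_pos_of_pos htn q
        rw [div_lt_iff₀ htnq] at ht2
        have hstep : t n ^ q < (M ^ ((1 - q ^ n) / (1 - q))) ^ q :=
          Real.rpow_lt_rpow htn.le hin hq0
        have : t (n + 1) < M * (M ^ ((1 - q ^ n) / (1 - q))) ^ q := by
          calc t (n + 1) < M * t n ^ q := ht2
            _ < M * (M ^ ((1 - q ^ n) / (1 - q))) ^ q := by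
                exact (mul_lt_mul_iff_right₀ hM).mpr hstep
        calc t (n + 1) < M * (M ^ ((1 - q ^ n) / (1 - q))) ^ q := this
          _ = M ^ (1 + (1 - q ^ n) / (1 - q) * q) := by
              rw [Real.rpow_add hM, Real.rpow_one, Real.rpow_mul hM.le]
          _ = M ^ ((1 - q ^ (n + 1)) / (1 - q)) := by
              congr 1
              field_simp
              ring
  have hfin := key B hB le_rfl
  rw [htB, hMdef, ← Real.rpow_mul hT.le] at hfin
  have : (1 - q) / (1 - q ^ B) * ((1 - q ^ B) / (1 - q)) = 1 := by
    field_simp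
  rw [this, Real.rpow_one] at hfin
  exact lt_irrefl T hfin
end

section
/- Let Q_1, …, Q_n be probability measures on a common measurable space (Ω, 𝓕), let Ψ : Ω → {1,…,n} be a measurable function (a test), and let G be a tree on the vertex set {1,…,n} with edge set E. Then (1/n) · Σ_{i=1}^{n} Q_i({ω : Ψ(ω) ≠ i}) ≥ (1/n) · Σ_{{i,j} ∈ E} (Q_i ⊓ Q_j)(Ω), where Q_i ⊓ Q_j denotes the infimum (greatest lower bound) of the two measures, so that (Q_i ⊓ Q_j)(Ω) = ∫ min{dQ_i, dQ_j} = 1 − TV(Q_i, Q_j). -/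
open MeasureTheory
open scoped ENNReal

open SimpleGraph SimpleGraph.Walk in
lemma tree_edge_sum {V : Type*} [Fintype V] [DecidableEq V] {G : SimpleGraph V}
    [DecidableRel G.Adj] (hG : G.IsTree) (k : V) (g : Sym2 V → ℝ≥0∞) :
    ∃ nxt : V → V, (∀ w, w ≠ k → G.Adj w (nxt w)) ∧
      ∑ e ∈ G.edgeFinset, g e = ∑ w ∈ ({k} : Finset V)ᶜ, g s(w, nxt w) := by
  classical
  choose f hf hf' using (hG.existsUnique_path · k)
  refine ⟨fun w => (f w).getVert 1, fun w hw => (f w).adj_snd (not_nil_of_ne hw), ?_⟩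
  refine (Finset.sum_bij
    (fun w hw => ((f w).firstDart <| not_nil_of_ne (by simpa using hw)).edge)
    (fun a ha => ?memEdges) ?inj ?surj ?val).symm
  case memEdges => simp
  case inj =>
    intros a ha b hb h
    wlog h' : (f a).length ≤ (f b).length generalizing a b
    · exact Eq.symm (this _ hb _ ha h.symm (le_of_not_ge h'))
    rw [dart_edge_eq_iff] at h
    obtain (h | h) := h
    · exact (congrArg (·.fst) h)
    · have h1 : ((f a).firstDart <| not_nil_of_ne (by simpa using ha)).snd = b :=
        congrArg (·.snd) h
      have h3 := congrArg Walk.length (hf' _ ((f _).tail.copy h1 rfl) ?_)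
      · rw [length_copy (f a).tail h1 rfl, ← add_left_inj 1,
          length_tail_add_one (not_nil_of_ne (by simpa using ha))] at h3
        omega
      · simp only [ne_eq, eq_mp_eq_cast, id_eq, isPath_copy]
        exact (isPath_copy _ _ _).2 (hf _).tail
  case surj =>
    simp only [mem_edgeFinset, Finset.mem_compl, Finset.mem_singleton, Sym2.forall, SimpleGraph.mem_edgeSet]
    intros x y h
    wlog h' : (f x).length ≤ (f y).length generalizing x y
    · rw [Sym2.eq_swap]
      exact this y x h.symm (le_of_not_ge h')
    refine ⟨y, ?_, dart_edge_eq_mk'_iff.2 <| Or.inr ?_⟩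
    · rintro rfl
      rw [← hf' _ .nil IsPath.nil, length_nil,
          ← hf' _ (.cons h .nil) (IsPath.nil.cons <| by simpa using h.ne),
          length_cons, length_nil] at h'
      simp [Nat.le_zero, Nat.one_ne_zero] at h'
    rw [← hf' _ (.cons h.symm (f x)) ((cons_isPath_iff _ _).2 ⟨hf _, fun hy => ?contra⟩)]
    · simp only [firstDart_toProd, getVert_cons_succ, getVert_zero, Prod.swap_prod_mk]
    case contra =>
      suffices (f x).takeUntil y hy = .cons h .nil by
        rw [← take_spec _ hy] at h'
        simp [this, hf' _ _ ((hf _).dropUntil hy)] at h'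
      refine (hG.existsUnique_path _ _).unique ((hf _).takeUntil _) ?_
      simp [h.ne]
  case val =>
    intro a ha
    rfl

/-- Part 1 of the multiple-hypothesis-testing lemma of Gao et al.: for probability
measures `Q_1, …, Q_n`, any test `Ψ`, and any tree `G` on `{1,…,n}` with edge set `E`,
`(1/n) Σ_i Q_i(Ψ ≠ i) ≥ (1/n) Σ_{{i,j} ∈ E} (Q_i ⊓ Q_j)(Ω)`. -/
theorem stmt_7 {Ω : Type*} [MeasurableSpace Ω] {n : ℕ} (hn : 1 ≤ n)
    (Q : Fin n → Measure Ω) [∀ i, IsProbabilityMeasure (Q i)]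
    (Ψ : Ω → Fin n) (hΨ : Measurable Ψ)
    (G : SimpleGraph (Fin n)) [DecidableRel G.Adj] (hG : G.IsTree) :
    (n : ℝ≥0∞)⁻¹ * ∑ e ∈ G.edgeFinset,
        Sym2.lift ⟨fun i j => (Q i ⊓ Q j) Set.univ, fun i j => by simp only []; rw [inf_comm]⟩ e
      ≤ (n : ℝ≥0∞)⁻¹ * ∑ i, Q i {ω | Ψ ω ≠ i} := by
  classical
  refine mul_le_mul_right ?_ _
  have hS : ∀ k : Fin n, MeasurableSet (Ψ ⁻¹' {k}) := fun k => hΨ (measurableSet_singleton k)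
  have hsplit : ∀ μ : Measure Ω, μ Set.univ = ∑ k : Fin n, μ (Ψ ⁻¹' {k}) := by
    intro μ
    rw [← tsum_fintype (L := SummationFilter.unconditional _), ← measure_iUnion ?_ hS]
    · congr 1; ext ω; simp
    · intro a b hab
      exact Disjoint.preimage _ (by simp [hab])
  calc ∑ e ∈ G.edgeFinset,
        Sym2.lift ⟨fun i j => (Q i ⊓ Q j) Set.univ, fun i j => by simp only []; rw [inf_comm]⟩ e
      = ∑ e ∈ G.edgeFinset, ∑ k : Fin n,
        Sym2.lift ⟨fun i j => (Q i ⊓ Q j) (Ψ ⁻¹' {k}), fun i j => by simp only []; rw [inf_comm]⟩ e := by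
        refine Finset.sum_congr rfl fun e he => ?_
        induction e using Sym2.ind with
        | _ i j => simp only [Sym2.lift_mk]; exact hsplit _
    _ = ∑ k : Fin n, ∑ e ∈ G.edgeFinset,
        Sym2.lift ⟨fun i j => (Q i ⊓ Q j) (Ψ ⁻¹' {k}), fun i j => by simp only []; rw [inf_comm]⟩ e :=
        Finset.sum_comm
    _ ≤ ∑ k : Fin n, ∑ w ∈ ({k} : Finset (Fin n))ᶜ, Q w (Ψ ⁻¹' {k}) := by
        refine Finset.sum_le_sum fun k _ => ?_
        obtain ⟨nxt, hadj, hsum⟩ := tree_edge_sum hG k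
          (Sym2.lift ⟨fun i j => (Q i ⊓ Q j) (Ψ ⁻¹' {k}), fun i j => by simp only []; rw [inf_comm]⟩)
        rw [hsum]
        refine Finset.sum_le_sum fun w hw => ?_
        simpa using Measure.le_iff'.mp (inf_le_left : Q w ⊓ Q (nxt w) ≤ Q w) (Ψ ⁻¹' {k})
    _ = ∑ w : Fin n, ∑ k ∈ ({w} : Finset (Fin n))ᶜ, Q w (Ψ ⁻¹' {k}) := by
        refine Finset.sum_comm' fun x y => ?_
        simp [eq_comm, ne_comm, and_comm]
    _ = ∑ w : Fin n, Q w {ω | Ψ ω ≠ w} := by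
        refine Finset.sum_congr rfl fun w _ => ?_
        rw [← measure_biUnion_finset ?_ (fun k _ => hS k)]
        · congr 1; ext ω; simp [eq_comm]
        · intro a ha b hb hab
          exact Disjoint.preimage _ (by simp [hab])
end

section
/- Let (X, dist) be a metric space, let r > 0, and let u_1, …, u_M ∈ X (M ≥ 2) satisfy dist(u_m, u_n) ≥ r for all m ≠ n. Define μ_1 : X → ℝ by μ_1(x) = max{ r/2, max_{1 ≤ j ≤ M} ( v_{1,j} − dist(x, u_j) ) } where v_{1,1} = (3/4)r and v_{1,j} = (5/8)r for j ≠ 1; and for each i with 2 ≤ i ≤ M define μ_i : X → ℝ by μ_i(x) = max{ r/2, max_{1 ≤ j ≤ M} ( v_{i,j} − dist(x, u_j) ) } where v_{i,1} = (3/4)r, v_{i,i} = (7/8)r, and v_{i,j} = (5/8)r for j ∉ {1, i}. Then for every i with 2 ≤ i ≤ M: (a) μ_i(x) = μ_1(x) for every x with dist(x, u_i) ≥ (3/8)r; and (b) μ_1(x) ≤ μ_i(x) ≤ μ_1(x) + r/4 for every x ∈ X. -/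
/-- Verification properties of the hard instances in the static lower bound (Theorem 3):
with arms `u_1, …, u_M` pairwise `r`-separated, peak values
`v i j = 3/4·r` if `j = 1`, `7/8·r` if `j = i` (`i ≥ 2`), `5/8·r` otherwise, and rewards
`μ i x = max(r/2, max_{1 ≤ j ≤ M} (v i j − dist x (u j)))`, every alternative instance
`2 ≤ i ≤ M` (a) agrees with the base instance `μ 1` at every `x` with
`dist(x, u i) ≥ (3/8) r`, and (b) satisfies `μ 1 ≤ μ i ≤ μ 1 + r/4` everywhere. -/
theorem stmt_13 {X : Type*} [MetricSpace X] (M : ℕ) (hM : 2 ≤ M)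
    (r : ℝ) (hr : 0 < r) (u : ℕ → X)
    (hsep : ∀ m ∈ Finset.Icc 1 M, ∀ n ∈ Finset.Icc 1 M, m ≠ n → r ≤ dist (u m) (u n))
    (v : ℕ → ℕ → ℝ)
    (hv : ∀ i j, v i j =
      if j = 1 then 3 / 4 * r else if j = i then 7 / 8 * r else 5 / 8 * r)
    (μ : ℕ → X → ℝ)
    (hμ : ∀ i x, μ i x = max (r / 2)
      ((Finset.Icc 1 M).sup' (Finset.nonempty_Icc.mpr (by omega))
        fun j => v i j - dist x (u j))) :
    ∀ i, 2 ≤ i → i ≤ M →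
      (∀ x : X, 3 / 8 * r ≤ dist x (u i) → μ i x = μ 1 x) ∧
      (∀ x : X, μ 1 x ≤ μ i x ∧ μ i x ≤ μ 1 x + r / 4) := by
  intro i hi2 hiM
  have hne : (Finset.Icc 1 M).Nonempty := Finset.nonempty_Icc.mpr (by omega)
  have hveq : ∀ j, j ≠ i → v 1 j = v i j := by
    intro j hj
    rw [hv, hv]
    by_cases h1 : j = 1 <;> simp [h1, hj, (by omega : j ≠ 1 → ¬ (1:ℕ) = i) ]
  have hvle : ∀ j, v 1 j ≤ v i j := by
    intro j
    by_cases hj : j = i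
    · subst hj; rw [hv, hv]
      split_ifs <;> nlinarith
    · exact (hveq j hj).le
  have hvle' : ∀ j, v i j ≤ v 1 j + r / 4 := by
    intro j
    rw [hv, hv]
    split_ifs <;> nlinarith
  have hlow : ∀ x : X, μ 1 x ≤ μ i x := by
    intro x
    rw [hμ, hμ]
    refine max_le (le_max_left _ _) ?_
    refine le_trans (Finset.sup'_le hne _ fun j hj => ?_) (le_max_right _ _)
    exact le_trans (by linarith [hvle j]) (Finset.le_sup' (fun j => v i j - dist x (u j)) hj)
  refine ⟨fun x hx => ?_, fun x => ⟨hlow x, ?_⟩⟩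
  · refine le_antisymm ?_ (hlow x)
    rw [hμ, hμ]
    refine max_le (le_max_left _ _) (Finset.sup'_le hne _ fun j hj => ?_)
    by_cases hji : j = i
    · subst hji
      have : v j j = 7 / 8 * r := by
        rw [hv, if_neg (show j ≠ 1 by omega), if_pos rfl]
      refine le_trans ?_ (le_max_left _ _)
      rw [this]; linarith
    · rw [← hveq j hji]
      refine le_trans ?_ (le_max_right _ _)
      exact Finset.le_sup' (fun k => v 1 k - dist x (u k)) hj
  · rw [hμ, hμ]
    refine max_le (by linarith [le_max_left (r/2) ((Finset.Icc 1 M).sup' hne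
      fun j => v 1 j - dist x (u j))]) (Finset.sup'_le hne _ fun j hj => ?_)
    have h1 : v 1 j - dist x (u j) ≤ (Finset.Icc 1 M).sup' hne
        fun k => v 1 k - dist x (u k) := Finset.le_sup' (fun k => v 1 k - dist x (u k)) hj
    have h2 := hvle' j
    have := le_max_right (r/2) ((Finset.Icc 1 M).sup' hne fun j => v 1 j - dist x (u j))
    linarith
end
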